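/- Let α : ℕ → ℕ be nondecreasing with α(0) = 0, and let β : ℕ → ℕ satisfy β(n) ≥ 1 for all n ≥ 1. Then for every n ≥ 1, ∏_{k=1}^{n} β(k)^{α(⌊n/k⌋)} = (∏_{k=1}^{n−1} β(k)^{α(⌊(n−1)/k⌋)}) · ∏_{d ∣ n} β(d)^{α(n/d) − α(n/d − 1)}, where the last product runs over the positive divisors d of n. Equivalently, if n!_E denotes the factorial generated by (α, β), then n!_E/(n−1)!_E = ∏_{d ∣ n} β(d)^{α(n/d) − α(n/d − 1)}. -/

import Mathlib

theorem stmt_15 (α β : ℕ → ℕ) (hmono : Monotone α) (hα0 : α 0 = 0)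
    (hβ : ∀ n, 1 ≤ n → 1 ≤ β n) :
    ∀ n, 1 ≤ n →
      ∏ k ∈ Finset.Icc 1 n, β k ^ α (n / k) =
        (∏ k ∈ Finset.Icc 1 (n - 1), β k ^ α ((n - 1) / k)) *
          ∏ d ∈ n.divisors, β d ^ (α (n / d) - α (n / d - 1)) := by
  intro n hn
  obtain ⟨m, rfl⟩ : ∃ m, n = m + 1 := ⟨n - 1, (Nat.succ_pred_eq_of_pos hn).symm⟩
  simp only [Nat.add_sub_cancel]
  have key : ∀ k, (m + 1) / k = m / k + if k ∣ m + 1 then 1 else 0 := fun k => Nat.succ_div (a := m) (b := k)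
  have h1 : ∀ k ∈ Finset.Icc 1 (m + 1),
      β k ^ α ((m + 1) / k) = β k ^ α (m / k) * β k ^ (α ((m + 1) / k) - α (m / k)) := by
    intro k _
    rw [← pow_add, Nat.add_sub_cancel' (hmono (Nat.div_le_div_right (Nat.le_succ m)))]
  rw [Finset.prod_congr rfl h1, Finset.prod_mul_distrib]
  congr 1
  · rw [Finset.prod_Icc_succ_top (Nat.succ_le_succ (Nat.zero_le m))]
    have : m / (m + 1) = 0 := Nat.div_eq_of_lt (Nat.lt_succ_self m)
    rw [this, hα0, pow_zero, mul_one]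
  · rw [← Finset.prod_subset (fun d hd => Finset.mem_Icc.mpr ⟨Nat.pos_of_mem_divisors hd, Nat.divisor_le hd⟩)]
    · refine Finset.prod_congr rfl fun d hd => ?_
      have hdvd : d ∣ m + 1 := (Nat.mem_divisors.mp hd).1
      have : m / d = (m + 1) / d - 1 := by
        rw [key d, if_pos hdvd, Nat.add_sub_cancel]
      rw [this]
    · intro k _ hk
      have : ¬ k ∣ m + 1 := fun h =>
        hk (Nat.mem_divisors.mpr ⟨h, Nat.succ_ne_zero m⟩)
      rw [key k, if_neg this, Nat.add_zero, Nat.sub_self, pow_zero]
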